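/- The subspace 𝕋_e of 𝕋 consisting of rooted locally finite trees with finitely many ends is not topologically complete; that is, 𝕋_e is not a G_δ subset of the complete metric space 𝕋. -/

import Mathlib

open scoped Classical

/-- A rooted, locally finite tree in the graph-theoretic sense. -/
structure LFTree : Type 1 where
  V : Type
  G : SimpleGraph V
  root : V
  isTree : G.IsTree
  locallyFinite : ∀ v, (G.neighborSet v).Finite

/-- The set of vertices at graph distance at most `k` from the root. -/
def LFTree.ball (T : LFTree) (k : ℕ) : Set T.V :=
  {v | T.G.dist T.root v ≤ k}

lemma LFTree.root_mem_ball (T : LFTree) (k : ℕ) : T.root ∈ T.ball k := by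
  simp [LFTree.ball, SimpleGraph.dist_self]

/-- `T^{≤k} = T'^{≤k}`: the restrictions to the balls of radius `k` around the roots are
isomorphic as rooted trees. -/
def TruncEquiv (T T' : LFTree) (k : ℕ) : Prop :=
  ∃ e : (T.G.induce (T.ball k)) ≃g (T'.G.induce (T'.ball k)),
    (e ⟨T.root, T.root_mem_ball k⟩ : T'.V) = T'.root

/-- Isomorphism of rooted trees. -/
def RootedIso (T T' : LFTree) : Prop :=
  ∃ e : T.G ≃g T'.G, e T.root = T'.root

/-- The space `𝕋` of rooted locally finite trees up to root-preserving isomorphism. -/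
def TreeSpace : Type 1 := Quot RootedIso

/-- The metric `d_𝕋(T₁,T₂) = Σ_k 2^{−k} 1_{T₁^{≤k} ≠ T₂^{≤k}}`. -/
noncomputable def treeDist (T T' : LFTree) : ℝ :=
  ∑' k : ℕ, if TruncEquiv T T' k then 0 else (1 / 2 : ℝ) ^ k

/-- The ends of a rooted tree: infinite self-avoiding paths starting from the root. -/
def LFTree.Ends (T : LFTree) : Set (ℕ → T.V) :=
  {f | Function.Injective f ∧ f 0 = T.root ∧ ∀ n, T.G.Adj (f n) (f (n + 1))}

/-- The subspace `𝕋_e` of trees with finitely many ends. -/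
def TreeSpaceE : Set TreeSpace :=
  {x | ∃ T : LFTree, x = Quot.mk RootedIso T ∧ T.Ends.Finite}


namespace Stmt11Aux


/-- Adjacency for comb graphs, on coordinates. -/
def combAdj (p q : ℕ × ℕ) : Prop :=
  (p.1 = q.1 ∧ (p.2 = q.2 + 1 ∨ q.2 = p.2 + 1)) ∨
  (p.2 = 0 ∧ q.2 = 0 ∧ (p.1 = q.1 + 1 ∨ q.1 = p.1 + 1))

abbrev CombV (S : Set ℕ) : Type := {p : ℕ × ℕ // p.2 = 0 ∨ p.1 ∈ S}

def combG (S : Set ℕ) : SimpleGraph (CombV S) where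
  Adj a b := combAdj a.1 b.1
  symm := by constructor; rintro ⟨⟨a1,a2⟩,_⟩ ⟨⟨b1,b2⟩,_⟩ hab; unfold combAdj at *; simp_all; omega
  loopless := by constructor; rintro ⟨⟨a1,a2⟩,_⟩ h; unfold combAdj at h; simp_all

def ht {S : Set ℕ} (v : CombV S) : ℕ := v.1.1 + v.1.2

lemma comb_step {S : Set ℕ} {a b : CombV S} (h : (combG S).Adj a b) :
    ht a = ht b + 1 ∨ ht b = ht a + 1 := by
  obtain ⟨⟨a1,a2⟩,_⟩ := a; obtain ⟨⟨b1,b2⟩,_⟩ := b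
  unfold combG combAdj at h; simp only at h; unfold ht; simp only; omega

lemma comb_parent_unique {S : Set ℕ} {v a b : CombV S}
    (hva : (combG S).Adj v a) (hvb : (combG S).Adj v b)
    (ha : ht a + 1 = ht v) (hb : ht b + 1 = ht v) : a = b := by
  obtain ⟨⟨v1,v2⟩,_⟩ := v; obtain ⟨⟨a1,a2⟩,_⟩ := a; obtain ⟨⟨b1,b2⟩,_⟩ := b
  unfold combG combAdj at hva hvb; unfold ht at ha hb; simp only at hva hvb ha hb
  have : a1 = b1 ∧ a2 = b2 := by omega
  exact Subtype.ext (by simp [Prod.ext_iff, this.1, this.2])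




section Height
variable {V : Type} {G : SimpleGraph V} {h : V → ℕ}

lemma walk_height_le (hstep : ∀ {a b : V}, G.Adj a b → h a = h b + 1 ∨ h b = h a + 1)
    {u v : V} (p : G.Walk u v) : h v ≤ h u + p.length ∧ h u ≤ h v + p.length := by
  induction p with
  | nil => simp
  | cons hadj p ih =>
      have := hstep hadj
      simp only [SimpleGraph.Walk.length_cons]
      omega

lemma cycle_false (hstep : ∀ {a b : V}, G.Adj a b → h a = h b + 1 ∨ h b = h a + 1)
    (hpar : ∀ {v a b : V}, G.Adj v a → G.Adj v b → h a + 1 = h v → h b + 1 = h v → a = b)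
    {u : V} (c : G.Walk u u) (hc : c.IsCycle)
    (hmax : ∀ x ∈ c.support, h x ≤ h u) : False := by
  cases c with
  | nil => exact hc.ne_nil rfl
  | @cons _ w _ hadj p =>
    obtain ⟨x, q, h', hcat⟩ := SimpleGraph.Walk.exists_cons_eq_concat hadj p
    have hwmem : w ∈ (SimpleGraph.Walk.cons hadj p).support := by simp
    have hxmem : x ∈ (SimpleGraph.Walk.cons hadj p).support := by
      rw [hcat]
      simp only [SimpleGraph.Walk.support_concat, List.concat_eq_append, List.mem_append]
      exact Or.inl (SimpleGraph.Walk.end_mem_support q)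
    have hw : h w + 1 = h u := by
      have := hstep hadj
      have := hmax w hwmem
      omega
    have hx : h x + 1 = h u := by
      have := hstep h'
      have := hmax x hxmem
      omega
    have hwx : w = x := hpar hadj h'.symm hw hx
    subst hwx
    -- edges contradiction
    have hnodup : (SimpleGraph.Walk.cons hadj p).edges.Nodup := hc.isTrail.edges_nodup
    have hedges : (SimpleGraph.Walk.cons hadj p).edges = q.edges ++ [s(w, u)] := by
      rw [hcat]; simp [SimpleGraph.Walk.edges_concat]
    rcases hq : q.edges with _ | ⟨e, t⟩
    · -- q has length 0, so the cycle has length ≤ 1 < 3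
      have hq0 : q.length = 0 := by
        have := q.length_edges; rw [hq] at this; simpa using this.symm
      have h3 := hc.three_le_length
      have : (SimpleGraph.Walk.cons hadj p).length = q.length + 1 := by
        rw [hcat, SimpleGraph.Walk.length_concat]
      omega
    · have : s(u, w) :: p.edges = e :: (t ++ [s(w, u)]) := by
        simpa [hq] using hedges
      have hpe : p.edges = t ++ [s(w, u)] := (List.cons.injEq _ _ _ _ ▸ this).2
      have hmem : s(u, w) ∈ p.edges := by
        rw [hpe]; simp [Sym2.eq_swap]
      simp only [SimpleGraph.Walk.edges_cons, List.nodup_cons] at hnodup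
      exact hnodup.1 hmem

lemma acyclic_of_height (hstep : ∀ {a b : V}, G.Adj a b → h a = h b + 1 ∨ h b = h a + 1)
    (hpar : ∀ {v a b : V}, G.Adj v a → G.Adj v b → h a + 1 = h v → h b + 1 = h v → a = b) :
    G.IsAcyclic := by
  intro v c hc
  -- pick a vertex of maximal height in the support
  have hne : c.support.toFinset.Nonempty := by
    simp [List.toFinset_eq_empty_iff, SimpleGraph.Walk.support_ne_nil]
  obtain ⟨u, hu, humax⟩ := c.support.toFinset.exists_max_image h hne
  rw [List.mem_toFinset] at hu
  have hc' := hc.rotate hu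
  refine cycle_false hstep hpar (c.rotate u hu) hc' ?_
  intro x hx
  rw [SimpleGraph.Walk.mem_support_iff] at hx
  rcases hx with rfl | hx
  · exact le_refl _
  · have hx' : x ∈ c.support.tail :=
      ((SimpleGraph.Walk.support_rotate c u hu).mem_iff).mp hx
    exact humax x (List.mem_toFinset.mpr (List.mem_of_mem_tail hx'))

end Height



section C
variable {V : Type} {G : SimpleGraph V} {h : V → ℕ} {r : V}

/-- From a parent function: every vertex has a walk to the root of length `h v`. -/
lemma exists_walk_of_parent (hroot : ∀ v : V, h v = 0 → v = r)
    (hpar : ∀ v : V, 0 < h v → ∃ u, G.Adj u v ∧ h u + 1 = h v) :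
    ∀ (n : ℕ) (v : V), h v = n → ∃ p : G.Walk r v, p.length = n := by
  intro n
  induction n with
  | zero => intro v hv; exact (hroot v hv) ▸ ⟨SimpleGraph.Walk.nil, rfl⟩
  | succ n ih =>
      intro v hv
      obtain ⟨u, hadj, hu⟩ := hpar v (by omega)
      obtain ⟨p, hp⟩ := ih u (by omega)
      exact ⟨p.concat hadj, by rw [SimpleGraph.Walk.length_concat, hp]⟩

lemma dist_eq_height (hstep : ∀ {a b : V}, G.Adj a b → h a = h b + 1 ∨ h b = h a + 1)
    (hr : h r = 0)
    (hroot : ∀ v : V, h v = 0 → v = r)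
    (hpar : ∀ v : V, 0 < h v → ∃ u, G.Adj u v ∧ h u + 1 = h v) (v : V) :
    G.dist r v = h v := by
  obtain ⟨p, hp⟩ := exists_walk_of_parent hroot hpar (h v) v rfl
  have h1 : G.dist r v ≤ h v := hp ▸ SimpleGraph.dist_le p
  have h2 : h v ≤ G.dist r v := by
    obtain ⟨q, hq⟩ := SimpleGraph.Reachable.exists_walk_length_eq_dist ⟨p⟩
    have := (walk_height_le (G := G) (h := h) hstep q).1
    omega
  omega

lemma connected_of_parent [Nonempty V] (hroot : ∀ v : V, h v = 0 → v = r)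
    (hpar : ∀ v : V, 0 < h v → ∃ u, G.Adj u v ∧ h u + 1 = h v) :
    G.Connected := by
  rw [SimpleGraph.connected_iff]
  refine ⟨fun u v => ?_, inferInstance⟩
  obtain ⟨p, -⟩ := exists_walk_of_parent hroot hpar (h u) u rfl
  obtain ⟨q, -⟩ := exists_walk_of_parent hroot hpar (h v) v rfl
  exact SimpleGraph.Reachable.trans ⟨p.reverse⟩ ⟨q⟩

end C

def combRoot (S : Set ℕ) : CombV S := ⟨(0, 0), Or.inl rfl⟩

lemma comb_ht_zero {S : Set ℕ} (v : CombV S) (hv : ht v = 0) : v = combRoot S := by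
  obtain ⟨⟨v1, v2⟩, hm⟩ := v
  unfold ht at hv; simp only at hv
  unfold combRoot
  have : v1 = 0 ∧ v2 = 0 := by omega
  exact Subtype.ext (by simp [Prod.ext_iff, this.1, this.2])

lemma comb_parent {S : Set ℕ} (v : CombV S) (hv : 0 < ht v) :
    ∃ u, (combG S).Adj u v ∧ ht u + 1 = ht v := by
  obtain ⟨⟨v1, v2⟩, hm⟩ := v
  simp only [ht] at hv
  rcases Nat.eq_zero_or_pos v2 with h2 | h2
  · subst h2
    refine ⟨⟨(v1 - 1, 0), Or.inl rfl⟩, ?_, ?_⟩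
    · show combAdj (v1 - 1, 0) (v1, 0)
      unfold combAdj; simp only; simp at hv ⊢; omega
    · simp only [ht]; simp at hv ⊢; omega
  · have hmem : v1 ∈ S := by
      rcases hm with h | h
      · simp only at h; omega
      · exact h
    refine ⟨⟨(v1, v2 - 1), ?_⟩, ?_, ?_⟩
    · rcases Nat.eq_zero_or_pos (v2 - 1) with h | h
      · exact Or.inl (by simpa using h)
      · exact Or.inr hmem
    · show combAdj (v1, v2 - 1) (v1, v2)
      unfold combAdj; dsimp only; omega
    · simp only [ht]; omega



lemma comb_finite_ht (S : Set ℕ) (M : ℕ) : {v : CombV S | ht v ≤ M}.Finite := by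
  have hsub : {v : CombV S | ht v ≤ M} ⊆ (Subtype.val) ⁻¹' (Set.Icc ((0,0) : ℕ × ℕ) (M, M)) := by
    rintro ⟨⟨v1, v2⟩, hm⟩ hv
    simp only [ht, Set.mem_setOf_eq] at hv
    simp only [Set.mem_preimage, Set.mem_Icc, Prod.le_def]
    omega
  exact ((Set.finite_Icc ((0,0) : ℕ × ℕ) (M, M)).preimage
    (Set.injOn_of_injective Subtype.val_injective)).subset hsub

instance (S : Set ℕ) : Nonempty (CombV S) := ⟨combRoot S⟩

noncomputable def Comb (S : Set ℕ) : LFTree where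
  V := CombV S
  G := combG S
  root := combRoot S
  isTree := ⟨connected_of_parent (comb_ht_zero (S := S)) comb_parent,
             acyclic_of_height comb_step comb_parent_unique⟩
  locallyFinite := fun v => (comb_finite_ht S (ht v + 1)).subset (by
    intro u hu
    have := comb_step (hu : (combG S).Adj v u)
    simp only [Set.mem_setOf_eq]
    omega)

lemma comb_dist (S : Set ℕ) (v : CombV S) :
    (combG S).dist (combRoot S) v = ht v :=
  dist_eq_height comb_step (by simp [ht, combRoot]) (comb_ht_zero (S := S)) comb_parent v

lemma comb_ball (S : Set ℕ) (k : ℕ) :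
    (Comb S).ball k = {v : CombV S | ht v ≤ k} := by
  ext v
  simp [LFTree.ball, Comb, comb_dist]

lemma comb_mem_ball {S : Set ℕ} {k : ℕ} (v : (Comb S).V) :
    v ∈ (Comb S).ball k ↔ ht v ≤ k := by rw [comb_ball]; rfl

lemma comb_truncEquiv {S S' : Set ℕ} {K : ℕ}
    (hag : S ∩ Set.Iic K = S' ∩ Set.Iic K) {k : ℕ} (hk : k ≤ K) :
    TruncEquiv (Comb S) (Comb S') k := by
  have key : ∀ (T T' : Set ℕ), T ∩ Set.Iic K = T' ∩ Set.Iic K →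
      ∀ v : CombV T, v ∈ (Comb T).ball k → (v.1.2 = 0 ∨ v.1.1 ∈ T') := by
    intro T T' h v hv
    replace hv := (comb_mem_ball (k := k) v).1 hv
    rcases v.2 with h0 | hmem
    · exact Or.inl h0
    · refine Or.inr ?_
      have hx : v.1.1 ∈ T' ∩ Set.Iic K := by
        rw [← h]
        refine ⟨hmem, ?_⟩
        simp only [Set.mem_Iic]
        unfold ht at hv
        omega
      exact hx.1
  have hball : ∀ (T T' : Set ℕ) (v : CombV T) (w : CombV T'), v.1 = w.1 →
      v ∈ (Comb T).ball k → w ∈ (Comb T').ball k := by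
    intro T T' v w hvw hv
    replace hv := (comb_mem_ball (k := k) v).1 hv
    refine (comb_mem_ball (k := k) w).2 ?_
    unfold ht at hv ⊢
    rw [hvw] at hv
    exact hv
  refine ⟨⟨⟨fun x => ⟨⟨x.1.1, key S S' hag x.1 x.2⟩, hball S S' x.1 _ rfl x.2⟩,
            fun x => ⟨⟨x.1.1, key S' S hag.symm x.1 x.2⟩, hball S' S x.1 _ rfl x.2⟩,
            fun x => by apply Subtype.ext; apply Subtype.ext; rfl,
            fun x => by apply Subtype.ext; apply Subtype.ext; rfl⟩, ?_⟩, ?_⟩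
  · intro a b
    exact Iff.rfl
  · rfl

lemma treeDist_le_of_truncEquiv {T T' : LFTree} {K : ℕ} (hK : ∀ k ≤ K, TruncEquiv T T' k) :
    treeDist T T' ≤ (1/2 : ℝ) ^ K := by
  classical
  have hg : Summable (fun k : ℕ => ((1:ℝ)/2) ^ k) :=
    summable_geometric_of_lt_one (by norm_num) (by norm_num)
  set f : ℕ → ℝ := fun k => if TruncEquiv T T' k then 0 else (1/2 : ℝ) ^ k with hf
  set g : ℕ → ℝ := fun k => if k ≤ K then 0 else (1/2 : ℝ) ^ k with hgdef
  have hfle : ∀ k, f k ≤ (1/2 : ℝ) ^ k := by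
    intro k; by_cases h : TruncEquiv T T' k <;> simp [hf, h] <;> positivity
  have hf0 : ∀ k, 0 ≤ f k := by
    intro k; by_cases h : TruncEquiv T T' k <;> simp [hf, h] <;> positivity
  have hgle : ∀ k, g k ≤ (1/2 : ℝ) ^ k := by
    intro k; by_cases h : k ≤ K <;> simp [hgdef, h] <;> positivity
  have hg0 : ∀ k, 0 ≤ g k := by
    intro k; by_cases h : k ≤ K <;> simp [hgdef, h] <;> positivity
  have hsf : Summable f := Summable.of_nonneg_of_le hf0 hfle hg
  have hsg : Summable g := Summable.of_nonneg_of_le hg0 hgle hg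
  have hle : ∀ k, f k ≤ g k := by
    intro k
    by_cases h : k ≤ K
    · simp [hf, hgdef, h, hK k h]
    · simp only [hf, hgdef, if_neg h]
      exact hfle k |>.trans_eq (by simp [h])
  have h1 : treeDist T T' ≤ ∑' k, g k := by
    have := Summable.tsum_le_tsum hle hsf hsg
    simpa [treeDist, hf] using this
  have h2 : ∑' k, g k = (1/2 : ℝ) ^ K := by
    have hkey := Summable.sum_add_tsum_nat_add (K + 1) hsg
    have hzero : ∑ i ∈ Finset.range (K + 1), g i = 0 := by
      apply Finset.sum_eq_zero
      intro i hi
      simp [hgdef, Nat.lt_succ_iff.mp (Finset.mem_range.mp hi)]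
    have hshift : ∀ i : ℕ, g (i + (K + 1)) = (1/2 : ℝ) ^ i * (1/2 : ℝ) ^ (K + 1) := by
      intro i
      rw [hgdef]
      simp only
      rw [if_neg (by omega), pow_add]
    rw [hzero, zero_add] at hkey
    rw [← hkey]
    simp_rw [hshift]
    rw [tsum_mul_right, tsum_geometric_of_lt_one (by norm_num) (by norm_num)]
    rw [pow_succ]
    ring
  linarith

lemma comb_ends_ht {S : Set ℕ} {f : ℕ → (Comb S).V} (hf : f ∈ (Comb S).Ends) :
    ∀ n, ht (f n) = n := by
  obtain ⟨hinj, h0, hadj⟩ := hf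
  have h00 : ht (f 0) = 0 := by rw [h0]; rfl
  have hstep : ∀ n, ht (f (n + 1)) = ht (f n) + 1 := by
    intro n
    induction n with
    | zero => rcases comb_step (hadj 0) with h | h <;> omega
    | succ n ih =>
        rcases comb_step (hadj (n + 1)) with h | h
        · exfalso
          have h1 : ht (f n) + 1 = ht (f (n + 1)) := by omega
          have h2 : ht (f (n + 1 + 1)) + 1 = ht (f (n + 1)) := by omega
          have heq := comb_parent_unique ((hadj n).symm) (hadj (n + 1)) h1 h2
          have := hinj heq
          omega
        · omega
  intro n
  induction n with
  | zero => exact h00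
  | succ n ih => rw [hstep n, ih]

lemma comb_child_unique {S : Set ℕ} {N : ℕ} (hS : ∀ s ∈ S, s ≤ N) {v a b : CombV S}
    (hv : N < ht v)
    (hva : (combG S).Adj v a) (hvb : (combG S).Adj v b)
    (ha : ht a = ht v + 1) (hb : ht b = ht v + 1) : a = b := by
  obtain ⟨⟨v1, v2⟩, hmv⟩ := v
  obtain ⟨⟨a1, a2⟩, hma⟩ := a
  obtain ⟨⟨b1, b2⟩, hmb⟩ := b
  have hma' : a2 = 0 ∨ a1 ≤ N := hma.imp id (hS a1)
  have hmb' : b2 = 0 ∨ b1 ≤ N := hmb.imp id (hS b1)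
  unfold combG combAdj at hva hvb
  unfold ht at hv ha hb
  simp only at hva hvb hv ha hb hma' hmb'
  have : a1 = b1 ∧ a2 = b2 := by omega
  exact Subtype.ext (by simp [Prod.ext_iff, this.1, this.2])

lemma comb_ends_eq {S : Set ℕ} {N : ℕ} (hS : ∀ s ∈ S, s ≤ N)
    {f g : ℕ → (Comb S).V} (hf : f ∈ (Comb S).Ends) (hg : g ∈ (Comb S).Ends)
    (heq : f (N + 1) = g (N + 1)) : f = g := by
  have hfh := comb_ends_ht hf
  have hgh := comb_ends_ht hg
  obtain ⟨hfinj, hf0, hfadj⟩ := hf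
  obtain ⟨hginj, hg0, hgadj⟩ := hg
  have down : ∀ k, f (N + 1 - k) = g (N + 1 - k) := by
    intro k
    induction k with
    | zero => exact heq
    | succ k ih =>
        rcases Nat.lt_or_ge (N + 1) (k + 1) with h | h
        · have e1 : N + 1 - (k + 1) = 0 := by omega
          rw [e1, hf0, hg0]
        · have e2 : N + 1 - k = (N + 1 - (k + 1)) + 1 := by omega
          set n := N + 1 - (k + 1) with hn
          rw [e2] at ih
          have hfp : (combG S).Adj (f (n + 1)) (f n) := (hfadj n).symm
          have hgp : (combG S).Adj (f (n + 1)) (g n) := by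
            rw [ih]; exact (hgadj n).symm
          exact comb_parent_unique hfp hgp (by rw [hfh, hfh]) (by rw [hgh, hfh])
  have up : ∀ k, f (N + 1 + k) = g (N + 1 + k) := by
    intro k
    induction k with
    | zero => exact heq
    | succ k ih =>
        have hfc : (combG S).Adj (f (N + 1 + k)) (f (N + 1 + k + 1)) := hfadj _
        have hgc : (combG S).Adj (f (N + 1 + k)) (g (N + 1 + k + 1)) := by
          rw [ih]; exact hgadj _
        have e : N + 1 + (k + 1) = (N + 1 + k) + 1 := by omega
        rw [e]
        exact comb_child_unique hS (by rw [hfh]; omega) hfc hgc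
          (by rw [hfh, hfh]) (by rw [hgh, hfh])
  funext n
  rcases le_or_gt n (N + 1) with h | h
  · have := down (N + 1 - n)
    rwa [show N + 1 - (N + 1 - n) = n by omega] at this
  · have := up (n - (N + 1))
    rwa [show N + 1 + (n - (N + 1)) = n by omega] at this

lemma comb_ends_finite {S : Set ℕ} (hS : S.Finite) : (Comb S).Ends.Finite := by
  obtain ⟨N, hN⟩ : ∃ N, ∀ s ∈ S, s ≤ N :=
    ⟨hS.toFinset.sup id, fun s hs => by
      simpa using Finset.le_sup (f := id) (hS.mem_toFinset.mpr hs)⟩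
  have hinj : Set.InjOn (fun f => f (N + 1)) (Comb S).Ends :=
    fun f hf g hg h => comb_ends_eq hN hf hg h
  refine Set.Finite.of_finite_image ?_ hinj
  refine (comb_finite_ht S (N + 1)).subset ?_
  rintro v ⟨f, hf, rfl⟩
  exact le_of_eq (comb_ends_ht hf (N + 1))

noncomputable def ray (S : Set ℕ) (s : ℕ) (hs : s ∈ S) : ℕ → CombV S := fun n =>
  if n ≤ s then ⟨(n, 0), Or.inl rfl⟩ else ⟨(s, n - s), Or.inr hs⟩

lemma ray_ht {S : Set ℕ} (s : ℕ) (hs : s ∈ S) (n : ℕ) : ht (ray S s hs n) = n := by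
  unfold ray ht
  split <;> simp <;> omega

lemma ray_mem {S : Set ℕ} (s : ℕ) (hs : s ∈ S) : ray S s hs ∈ (Comb S).Ends := by
  refine ⟨?_, ?_, ?_⟩
  · intro a b hab
    have := congrArg ht hab
    rwa [ray_ht, ray_ht] at this
  · simp only [ray, if_pos (Nat.zero_le s)]; rfl
  · intro n
    show combAdj (ray S s hs n).1 (ray S s hs (n + 1)).1
    unfold ray combAdj
    split_ifs <;> simp <;> omega

lemma comb_ends_infinite {S : Set ℕ} (hS : S.Infinite) : (Comb S).Ends.Infinite := by
  haveI : Infinite ↥S := hS.to_subtype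
  have key : ∀ (a b : ↥S), ray S a.1 a.2 = ray S b.1 b.2 → a.1 < b.1 → False := by
    intro a b h hab
    have h1 := congrFun h (a.1 + 1)
    unfold ray at h1
    rw [if_neg (by omega), if_pos (by omega)] at h1
    have h2 := congrArg (fun v : CombV S => v.1.2) h1
    simp at h2
  refine Set.infinite_of_injective_forall_mem
    (f := fun x : ↥S => ray S x.1 x.2) ?_ ?_
  · intro a b h
    rcases lt_trichotomy a.1 b.1 with hlt | heq | hgt
    · exact absurd (key a b h hlt) (by simp)
    · exact Subtype.ext heq
    · exact absurd (key b a h.symm hgt) (by simp)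
  · intro x
    exact ray_mem x.1 x.2

lemma rootedIso_equivalence : Equivalence RootedIso := by
  refine ⟨fun T => ⟨RelIso.refl _, rfl⟩, ?_, ?_⟩
  · rintro T T' ⟨e, he⟩
    exact ⟨e.symm, by rw [← he]; exact e.symm_apply_apply _⟩
  · rintro T T' T'' ⟨e, he⟩ ⟨e', he'⟩
    exact ⟨e.trans e', by rw [RelIso.trans_apply, he, he']⟩

lemma ends_finite_of_rootedIso {T T' : LFTree} (h : RootedIso T T')
    (hfin : T'.Ends.Finite) : T.Ends.Finite := by
  obtain ⟨e, he⟩ := h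
  have hsub : T.Ends ⊆ (fun f => (⇑e) ∘ f) ⁻¹' T'.Ends := by
    rintro f ⟨hinj, h0, hadj⟩
    refine ⟨e.toEquiv.injective.comp hinj, ?_, ?_⟩
    · simp only [Function.comp_apply, h0, he]
    · intro n
      exact e.map_adj_iff.mpr (hadj n)
  have hpre : ((fun f : ℕ → T.V => (⇑e) ∘ f) ⁻¹' T'.Ends).Finite := by
    refine hfin.preimage ?_
    intro f _ g _ hfg
    funext n
    exact e.toEquiv.injective (congrFun hfg n)
  exact hpre.subset hsub

end Stmt11Aux


open Stmt11Aux

/-- the subspace `𝕋_e ⊆ 𝕋` of trees with finitely many ends is not a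
`G_δ` subset of the complete metric space `(𝕋, d_𝕋)`; hence, by Mazurkiewicz's theorem,
it is not topologically complete. -/
theorem stmt_11 (m : MetricSpace TreeSpace)
    (hdist : ∀ T T' : LFTree, m.dist (Quot.mk _ T) (Quot.mk _ T') = treeDist T T') :
    ¬∃ Gs : ℕ → Set TreeSpace,
        (∀ n, @IsOpen TreeSpace m.toUniformSpace.toTopologicalSpace (Gs n)) ∧
        TreeSpaceE = ⋂ n, Gs n := by
  letI := m
  letI : MetricSpace (Quot RootedIso) := m
  rintro ⟨Gs, hopen, hE⟩
  have key : ∀ (n : ℕ) (s : Finset ℕ), ∃ K : ℕ, 0 < K ∧ (∀ x ∈ s, x < K) ∧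
      ∀ S' : Set ℕ, (↑s : Set ℕ) ∩ Set.Iic (K - 1) = S' ∩ Set.Iic (K - 1) →
        Quot.mk RootedIso (Comb S') ∈ Gs n := by
    intro n s
    have hmem : Quot.mk RootedIso (Comb ↑s) ∈ Gs n := by
      have hmem' : Quot.mk RootedIso (Comb ↑s) ∈ TreeSpaceE :=
        ⟨_, rfl, comb_ends_finite s.finite_toSet⟩
      rw [hE] at hmem'
      exact Set.mem_iInter.mp hmem' n
    obtain ⟨ε, hε, hball⟩ := Metric.isOpen_iff.mp (hopen n) _ hmem
    obtain ⟨K0, hK0⟩ := exists_pow_lt_of_lt_one hε (by norm_num : (1/2 : ℝ) < 1)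
    refine ⟨max (K0 + 1) ((s.sup id) + 1), by omega, ?_, ?_⟩
    · intro x hx
      have := Finset.le_sup (f := id) hx
      simp only [id] at this
      omega
    · intro S' hag
      apply hball
      show dist (Quot.mk RootedIso (Comb S')) (Quot.mk RootedIso (Comb ↑s)) < ε
      set K := max (K0 + 1) ((s.sup id) + 1) with hKdef
      have hdd : dist (Quot.mk RootedIso (Comb S')) (Quot.mk RootedIso (Comb ↑s))
          = treeDist (Comb S') (Comb ↑s) := hdist _ _
      rw [hdd]
      have hle : treeDist (Comb S') (Comb ↑s) ≤ (1/2 : ℝ) ^ (K - 1) :=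
        treeDist_le_of_truncEquiv (fun k hk => comb_truncEquiv hag.symm hk)
      have hmono : (1/2 : ℝ) ^ (K - 1) ≤ (1/2 : ℝ) ^ K0 :=
        pow_le_pow_of_le_one (by norm_num) (by norm_num) (by omega)
      linarith
  choose step h1 h2 h3 using key
  let Sf : ℕ → Finset ℕ := fun n => Nat.rec ∅ (fun m s => insert (step m s) s) n
  let k : ℕ → ℕ := fun n => step n (Sf n)
  have hSf : ∀ n, Sf (n + 1) = insert (k n) (Sf n) := fun n => rfl
  have hmem' : ∀ i n, i < n → k i ∈ Sf n := by
    intro i n hin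
    induction n with
    | zero => omega
    | succ n ih =>
        rw [hSf]
        rcases Nat.lt_or_ge i n with h | h
        · exact Finset.mem_insert_of_mem (ih h)
        · have : i = n := by omega
          subst this
          exact Finset.mem_insert_self _ _
  have hmono : ∀ i n, i < n → k i < k n := fun i n hin => h2 n (Sf n) (k i) (hmem' i n hin)
  have hinj : Function.Injective k := by
    intro a b hab
    rcases lt_trichotomy a b with h | h | h
    · exact absurd hab (ne_of_lt (hmono a b h))
    · exact h
    · exact absurd hab.symm (ne_of_lt (hmono b a h))
  have hSfchar : ∀ n x, x ∈ Sf n → ∃ i, i < n ∧ k i = x := by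
    intro n
    induction n with
    | zero => intro x hx; exact absurd hx (Finset.notMem_empty x)
    | succ n ih =>
        intro x hx
        rw [hSf] at hx
        rcases Finset.mem_insert.mp hx with h | h
        · exact ⟨n, by omega, h.symm⟩
        · obtain ⟨i, hi, he⟩ := ih x h
          exact ⟨i, by omega, he⟩
  have hGs : ∀ n, Quot.mk RootedIso (Comb (Set.range k)) ∈ Gs n := by
    intro n
    apply h3 n (Sf n)
    ext x
    simp only [Set.mem_inter_iff, Set.mem_Iic, Finset.coe_sort_coe, Finset.mem_coe,
      Set.mem_range]
    constructor
    · rintro ⟨hx, hxle⟩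
      obtain ⟨i, -, he⟩ := hSfchar n x hx
      exact ⟨⟨i, he⟩, hxle⟩
    · rintro ⟨⟨i, rfl⟩, hle⟩
      refine ⟨?_, hle⟩
      have hkn : 0 < step n (Sf n) := h1 n (Sf n)
      have hki : k i < k n := by
        show k i < step n (Sf n)
        omega
      have hin : i < n := by
        by_contra hge
        rcases Nat.eq_or_lt_of_le (not_lt.mp hge) with h | h
        · subst h; omega
        · exact absurd hki (not_lt.mpr (le_of_lt (hmono n i h)))
      exact hmem' i n hin
  have hmemE : Quot.mk RootedIso (Comb (Set.range k)) ∈ TreeSpaceE := by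
    rw [hE]
    exact Set.mem_iInter.mpr hGs
  obtain ⟨T, hTeq, hTfin⟩ := hmemE
  have hiso : RootedIso (Comb (Set.range k)) T :=
    rootedIso_equivalence.eqvGen_iff.mp (Quot.eq.mp hTeq)
  have hfin : (Comb (Set.range k)).Ends.Finite := ends_finite_of_rootedIso hiso hTfin
  exact comb_ends_infinite (Set.infinite_range_of_injective hinj) hfin
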